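/- Let G be a connected balanced S_{1,3}-free bipartite graph with minimum degree at least 4, and let F be a 2-factor of G with the minimum number of connected components. Then for every vertex u of G, the neighborhood N_G(u) is contained in at most two components of F. -/

import Mathlib

open SimpleGraph

/-- `S_{k,l}`: two stars `K_{1,k}` and `K_{1,l}` with centers `0` and `1` joined by an edge.
Leaves of `0` are `2..k+1`; leaves of `1` are `k+2..k+l+1`. -/
def starStar (k l : ℕ) : SimpleGraph (Fin (k + l + 2)) :=
  SimpleGraph.fromRel fun a b =>
    ((a : ℕ) = 0 ∧ (b : ℕ) = 1) ∨
    ((a : ℕ) = 0 ∧ 2 ≤ (b : ℕ) ∧ (b : ℕ) ≤ k + 1) ∨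
    ((a : ℕ) = 1 ∧ k + 2 ≤ (b : ℕ))

/-- `G` contains no induced subgraph isomorphic to `S_{k,l}`. -/
def SFree (k l : ℕ) {V : Type*} (G : SimpleGraph V) : Prop :=
  ¬ ∃ f : Fin (k + l + 2) ↪ V, ∀ a b, G.Adj (f a) (f b) ↔ (starStar k l).Adj a b

/-- `(X, Y)` is a bipartition of the graph `G`. -/
def IsBipartition {V : Type*} (G : SimpleGraph V) (X Y : Set V) : Prop :=
  (∀ v, v ∈ X ∨ v ∈ Y) ∧ Disjoint X Y ∧
    ∀ ⦃u v⦄, G.Adj u v → (u ∈ X ∧ v ∈ Y) ∨ (u ∈ Y ∧ v ∈ X)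

section AuxLemmas

variable {V : Type*} [Fintype V]

lemma two_reg_reach_delete (F : SimpleGraph V) (h2 : ∀ v, (F.neighborSet v).ncard = 2)
    {a b c d : V} (hab : F.Adj a b) (hcd : F.Adj c d) (hac : ¬ F.Reachable a c) :
    (F.deleteEdges {s(a,b), s(c,d)}).Reachable a b := by
  classical
  by_contra hnr
  set H := F.deleteEdges {s(a,b), s(c,d)} with hHdef
  have hHF : H ≤ F := F.deleteEdges_le _
  set S : Set V := {v | H.Reachable a v} with hSdef
  have haS : a ∈ S := Reachable.refl a
  have hFS : ∀ v ∈ S, F.Reachable a v := fun v hv => Reachable.mono hHF hv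
  have hbS : b ∉ S := hnr
  have hcS : c ∉ S := fun h => hac (hFS c h)
  have hdS : d ∉ S := fun h => hac ((hFS d h).trans hcd.symm.reachable)
  have hclosed : ∀ v ∈ S, H.neighborSet v ⊆ S := by
    intro v hv w hw
    exact (hv : H.Reachable a v).trans (Adj.reachable hw)
  have hanb : a ≠ b := hab.ne
  have hanc : a ≠ c := fun h => hac (by subst h; exact Reachable.refl a)
  have hand : a ≠ d := fun h => hac (by subst h; exact hcd.symm.reachable)
  -- neighbor sets in H
  have haN : H.neighborSet a = F.neighborSet a \ {b} := by
    ext w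
    constructor
    · intro hw
      rw [mem_neighborSet, hHdef, deleteEdges_adj] at hw
      refine ⟨hw.1, ?_⟩
      simp only [Set.mem_singleton_iff]
      rintro rfl
      exact hw.2 (Set.mem_insert _ _)
    · rintro ⟨h1, h2⟩
      simp only [Set.mem_singleton_iff] at h2
      rw [mem_neighborSet, hHdef, deleteEdges_adj]
      refine ⟨h1, ?_⟩
      intro hmem
      simp only [Set.mem_insert_iff, Set.mem_singleton_iff] at hmem
      rcases hmem with h | h <;> rw [Sym2.eq_iff] at h
      · rcases h with ⟨_, h⟩ | ⟨h, _⟩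
        · exact h2 h
        · exact hanb h
      · rcases h with ⟨h, _⟩ | ⟨h, _⟩
        · exact hanc h
        · exact hand h
  have hvN : ∀ v ∈ S, v ≠ a → H.neighborSet v = F.neighborSet v := by
    intro v hv hva
    have hvb : v ≠ b := fun h => hbS (h ▸ hv)
    have hvc : v ≠ c := fun h => hcS (h ▸ hv)
    have hvd : v ≠ d := fun h => hdS (h ▸ hv)
    ext w
    constructor
    · intro hw
      rw [mem_neighborSet, hHdef, deleteEdges_adj] at hw
      exact hw.1
    · intro h1
      rw [mem_neighborSet] at h1
      rw [mem_neighborSet, hHdef, deleteEdges_adj]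
      refine ⟨h1, ?_⟩
      intro hmem
      simp only [Set.mem_insert_iff, Set.mem_singleton_iff] at hmem
      rcases hmem with h | h <;> rw [Sym2.eq_iff] at h
      · rcases h with ⟨h, _⟩ | ⟨h, _⟩
        · exact hva h
        · exact hvb h
      · rcases h with ⟨h, _⟩ | ⟨h, _⟩
        · exact hvc h
        · exact hvd h
  -- induced graph on S
  let H' : SimpleGraph S := H.induce S
  letI : DecidableRel H'.Adj := Classical.decRel _
  letI : DecidableEq V := Classical.decEq V
  have hdeg : ∀ v : S, (H'.neighborSet v).ncard = (H.neighborSet v.val).ncard := by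
    intro v
    have hpre : H'.neighborSet v = (Subtype.val : S → V) ⁻¹' (H.neighborSet v.val) := by
      ext w
      simp only [mem_neighborSet, Set.mem_preimage, comap_adj, Function.Embedding.coe_subtype]
      rfl
    rw [hpre, Set.ncard_preimage_of_injective_subset_range Subtype.val_injective]
    rw [Subtype.range_coe]
    exact hclosed v.val v.property
  have hdeg2 : ∀ v : S, H'.degree v = (H.neighborSet v.val).ncard := by
    intro v
    rw [← hdeg v, ← card_neighborFinset_eq_degree]
    rw [neighborFinset_def, ← Set.ncard_eq_toFinset_card']
  have hsumeven : ∑ v : S, H'.degree v = 2 * H'.edgeFinset.card :=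
    H'.sum_degrees_eq_twice_card_edges
  set a0 : S := ⟨a, haS⟩ with ha0
  have hda : H'.degree a0 = 1 := by
    have hmem : b ∈ F.neighborSet a := hab
    have : (H.neighborSet (a0 : V)) = F.neighborSet a \ {b} := haN
    rw [hdeg2, this, Set.ncard_diff_singleton_of_mem hmem, h2 a]
  have hdv : ∀ v : S, v ≠ a0 → H'.degree v = 2 := by
    intro v hv
    have hne : v.val ≠ a := fun h => hv (Subtype.ext h)
    rw [hdeg2, hvN v.val v.property hne, h2]
  have hsum2 : ∑ v : S, H'.degree v = 2 * (Finset.univ.erase a0).card + 1 := by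
    rw [← Finset.sum_erase_add Finset.univ _ (Finset.mem_univ a0), hda]
    congr 1
    rw [Finset.sum_congr rfl (fun v hv => hdv v (Finset.ne_of_mem_erase hv))]
    rw [Finset.sum_const, smul_eq_mul, mul_comm]
  omega


lemma merge_lemma (G F : SimpleGraph V) (hFG : F ≤ G)
    (hF2 : ∀ v, (F.neighborSet v).ncard = 2)
    {u x v2 a2 : V} (hux : F.Adj u x) (hva : F.Adj v2 a2)
    (hc1 : G.Adj u v2) (hc2 : G.Adj a2 x) (hsep : ¬ F.Reachable u v2) :
    ∃ F' : SimpleGraph V, F' ≤ G ∧ (∀ v, (F'.neighborSet v).ncard = 2) ∧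
      Nat.card F'.ConnectedComponent < Nat.card F.ConnectedComponent := by
  classical
  have hrux : F.Reachable u x := hux.reachable
  have hrva : F.Reachable v2 a2 := hva.reachable
  have huxne : u ≠ x := hux.ne
  have hvane : v2 ≠ a2 := hva.ne
  have huv : u ≠ v2 := fun h => hsep (by subst h; exact Reachable.refl u)
  have hua : u ≠ a2 := fun h => hsep (by subst h; exact hrva.symm)
  have hxv : x ≠ v2 := fun h => hsep (by subst h; exact hrux)
  have hxa : x ≠ a2 := fun h => hsep (hrux.trans (by rw [h]; exact hrva.symm))
  have hnuv : ¬ F.Adj u v2 := fun h => hsep h.reachable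
  have hnax : ¬ F.Adj a2 x := fun h => hsep (hrux.trans (hrva.trans h.reachable).symm)
  set F' : SimpleGraph V :=
    SimpleGraph.fromEdgeSet ((F.edgeSet \ {s(u,x), s(v2,a2)}) ∪ {s(u,v2), s(a2,x)}) with hF'def
  have hadj : ∀ p q, F'.Adj p q ↔
      ((F.Adj p q ∧ s(p,q) ≠ s(u,x) ∧ s(p,q) ≠ s(v2,a2)) ∨ s(p,q) = s(u,v2) ∨ s(p,q) = s(a2,x)) := by
    intro p q
    rw [hF'def, fromEdgeSet_adj]
    simp only [Set.mem_union, Set.mem_diff, Set.mem_insert_iff, Set.mem_singleton_iff,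
      mem_edgeSet]
    constructor
    · rintro ⟨⟨h1, h2⟩ | h, _⟩
      · push_neg at h2
        exact Or.inl ⟨h1, h2.1, h2.2⟩
      · exact Or.inr h
    · rintro (⟨h1, h2, h3⟩ | h | h)
      · exact ⟨Or.inl ⟨h1, by push_neg; exact ⟨h2, h3⟩⟩, h1.ne⟩
      · refine ⟨Or.inr (Or.inl h), ?_⟩
        rw [Sym2.eq_iff] at h
        rcases h with ⟨rfl, rfl⟩ | ⟨rfl, rfl⟩
        · exact huv
        · exact huv.symm
      · refine ⟨Or.inr (Or.inr h), ?_⟩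
        rw [Sym2.eq_iff] at h
        rcases h with ⟨rfl, rfl⟩ | ⟨rfl, rfl⟩
        · exact hxa.symm
        · exact hxa
  -- F' ≤ G
  have hF'G : F' ≤ G := by
    intro p q h
    rw [hadj] at h
    rcases h with ⟨h1, _, _⟩ | h | h
    · exact hFG h1
    · rw [Sym2.eq_iff] at h
      rcases h with ⟨rfl, rfl⟩ | ⟨rfl, rfl⟩
      · exact hc1
      · exact hc1.symm
    · rw [Sym2.eq_iff] at h
      rcases h with ⟨rfl, rfl⟩ | ⟨rfl, rfl⟩
      · exact hc2
      · exact hc2.symm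
  -- Sym2 helpers
  have key : ∀ (p q r w : V), p ≠ q → p ≠ r → (s(p,w) = s(q,r) ↔ False) := by
    intro p q r w h1 h2
    rw [Sym2.eq_iff]
    constructor
    · rintro (⟨h, _⟩ | ⟨h, _⟩)
      · exact h1 h
      · exact h2 h
    · exact False.elim
  have key2 : ∀ (p w r : V), p ≠ r → (s(p,w) = s(p,r) ↔ w = r) := by
    intro p w r h
    rw [Sym2.eq_iff]
    constructor
    · rintro (⟨_, h'⟩ | ⟨h', _⟩)
      · exact h'
      · exact absurd h' h
    · exact fun h' => Or.inl ⟨rfl, h'⟩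
  have key3 : ∀ (p w r : V), p ≠ r → (s(p,w) = s(r,p) ↔ w = r) := by
    intro p w r h
    rw [Sym2.eq_iff]
    constructor
    · rintro (⟨h', _⟩ | ⟨_, h'⟩)
      · exact absurd h' h
      · exact h'
    · exact fun h' => Or.inr ⟨rfl, h'⟩
  -- neighbor sets
  have hNu : F'.neighborSet u = insert v2 (F.neighborSet u \ {x}) := by
    ext w
    simp only [mem_neighborSet, hadj]
    simp only [ne_eq, key2 u w x huxne, key u v2 a2 w huv hua, key2 u w v2 huv, key u a2 x w hua huxne]
    simp only [Set.mem_insert_iff, Set.mem_diff, Set.mem_singleton_iff]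
    tauto
  have hNx : F'.neighborSet x = insert a2 (F.neighborSet x \ {u}) := by
    ext w
    simp only [mem_neighborSet, hadj]
    simp only [ne_eq, key3 x w u huxne.symm, key x v2 a2 w hxv hxa, key x u v2 w huxne.symm hxv,
      key3 x w a2 hxa]
    simp only [Set.mem_insert_iff, Set.mem_diff, Set.mem_singleton_iff]
    tauto
  have hNv : F'.neighborSet v2 = insert u (F.neighborSet v2 \ {a2}) := by
    ext w
    simp only [mem_neighborSet, hadj]
    simp only [ne_eq, key v2 u x w huv.symm hxv.symm, key2 v2 w a2 hvane, key3 v2 w u huv.symm,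
      key v2 a2 x w hvane hxv.symm]
    simp only [Set.mem_insert_iff, Set.mem_diff, Set.mem_singleton_iff]
    tauto
  have hNa : F'.neighborSet a2 = insert x (F.neighborSet a2 \ {v2}) := by
    ext w
    simp only [mem_neighborSet, hadj]
    simp only [ne_eq, key a2 u x w hua.symm hxa.symm, key3 a2 w v2 hvane.symm, key a2 u v2 w hua.symm hvane.symm,
      key2 a2 w x hxa.symm]
    simp only [Set.mem_insert_iff, Set.mem_diff, Set.mem_singleton_iff]
    tauto
  have hNgen : ∀ v, v ≠ u → v ≠ x → v ≠ v2 → v ≠ a2 → F'.neighborSet v = F.neighborSet v := by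
    intro v h1 h2 h3 h4
    ext w
    simp only [mem_neighborSet, hadj]
    simp only [ne_eq, key v u x w h1 h2, key v v2 a2 w h3 h4, key v u v2 w h1 h3, key v a2 x w h4 h2]
    tauto
  -- degree 2 everywhere
  have hF'2 : ∀ v, (F'.neighborSet v).ncard = 2 := by
    intro v
    by_cases h1 : v = u
    · subst h1
      have hm : x ∈ F.neighborSet v := hux
      have hnm : v2 ∉ F.neighborSet v \ {x} := fun h => hnuv h.1
      rw [hNu, Set.ncard_insert_of_notMem hnm (Set.toFinite _),
        Set.ncard_diff_singleton_of_mem hm, hF2 v]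
    · by_cases h2 : v = x
      · subst h2
        have hm : u ∈ F.neighborSet v := hux.symm
        have hnm : a2 ∉ F.neighborSet v \ {u} := fun h => hnax h.1.symm
        rw [hNx, Set.ncard_insert_of_notMem hnm (Set.toFinite _),
          Set.ncard_diff_singleton_of_mem hm, hF2 v]
      · by_cases h3 : v = v2
        · subst h3
          have hm : a2 ∈ F.neighborSet v := hva
          have hnm : u ∉ F.neighborSet v \ {a2} := fun h => hnuv h.1.symm
          rw [hNv, Set.ncard_insert_of_notMem hnm (Set.toFinite _),
            Set.ncard_diff_singleton_of_mem hm, hF2 v]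
        · by_cases h4 : v = a2
          · subst h4
            have hm : v2 ∈ F.neighborSet v := hva.symm
            have hnm : x ∉ F.neighborSet v \ {v2} := fun h => hnax h.1
            rw [hNa, Set.ncard_insert_of_notMem hnm (Set.toFinite _),
              Set.ncard_diff_singleton_of_mem hm, hF2 v]
          · rw [hNgen v h1 h2 h3 h4, hF2 v]
  -- deleted subgraph is below F'
  have hle' : F.deleteEdges {s(u,x), s(v2,a2)} ≤ F' := by
    intro p q h
    rw [deleteEdges_adj] at h
    rw [hadj]
    refine Or.inl ⟨h.1, ?_, ?_⟩
    · intro he; exact h.2 (by rw [he]; exact Set.mem_insert _ _)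
    · intro he; exact h.2 (by rw [he]; exact Set.mem_insert_of_mem _ rfl)
  have hr1 : F'.Reachable u x :=
    (two_reg_reach_delete F hF2 hux hva hsep).mono hle'
  have hr2 : F'.Reachable v2 a2 := by
    have := two_reg_reach_delete F hF2 hva hux (fun h => hsep h.symm)
    rw [Set.pair_comm] at this
    exact this.mono hle'
  -- key: F-adjacency implies same F'-component
  have hkey : ∀ p q, F.Adj p q → F'.connectedComponentMk p = F'.connectedComponentMk q := by
    intro p q h
    by_cases h1 : s(p,q) = s(u,x)
    · rw [Sym2.eq_iff] at h1
      rcases h1 with ⟨rfl, rfl⟩ | ⟨rfl, rfl⟩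
      · exact ConnectedComponent.sound hr1
      · exact ConnectedComponent.sound hr1.symm
    · by_cases h2 : s(p,q) = s(v2,a2)
      · rw [Sym2.eq_iff] at h2
        rcases h2 with ⟨rfl, rfl⟩ | ⟨rfl, rfl⟩
        · exact ConnectedComponent.sound hr2
        · exact ConnectedComponent.sound hr2.symm
      · refine ConnectedComponent.sound (Adj.reachable ?_)
        rw [hadj]
        exact Or.inl ⟨h, h1, h2⟩
  -- the induced map on components
  let φ : F.ConnectedComponent → F'.ConnectedComponent :=
    ConnectedComponent.lift (fun v => F'.connectedComponentMk v)
      (by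
        intro v w p hp
        clear hp
        induction p with
        | nil => rfl
        | cons h p ih => exact (hkey _ _ h).trans ih)
  have hφmk : ∀ v, φ (F.connectedComponentMk v) = F'.connectedComponentMk v := fun _ => rfl
  have hsurj : Function.Surjective φ := by
    intro C
    obtain ⟨v, hv⟩ := Quot.exists_rep C
    exact ⟨F.connectedComponentMk v, hv⟩
  have hninj : ¬ Function.Injective φ := by
    intro hinj
    have h1 : φ (F.connectedComponentMk u) = φ (F.connectedComponentMk v2) := by
      rw [hφmk, hφmk]
      refine ConnectedComponent.sound (Adj.reachable ?_)
      rw [hadj]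
      exact Or.inr (Or.inl rfl)
    exact hsep (ConnectedComponent.exact (hinj h1))
  refine ⟨F', hF'G, hF'2, ?_⟩
  haveI : Fintype F.ConnectedComponent := Fintype.ofFinite _
  haveI : Fintype F'.ConnectedComponent := Fintype.ofFinite _
  rw [Nat.card_eq_fintype_card, Nat.card_eq_fintype_card]
  exact Fintype.card_lt_of_surjective_not_injective φ hsurj hninj


end AuxLemmas

instance : DecidableRel (starStar 1 3).Adj := fun a b =>
  decidable_of_iff' _ (SimpleGraph.fromRel_adj _ a b)

lemma keyS {V : Type*} (G : SimpleGraph V) (X Y : Set V) (hbip : IsBipartition G X Y)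
    (hfree : SFree 1 3 G) (u v2 t x y v3 : V)
    (huv2 : G.Adj u v2) (ht : G.Adj v2 t) (htu : t ≠ u)
    (hx : G.Adj u x) (hy : G.Adj u y) (hv3 : G.Adj u v3)
    (hxy : x ≠ y) (hxv3 : x ≠ v3) (hyv3 : y ≠ v3)
    (hv2x : v2 ≠ x) (hv2y : v2 ≠ y) (hv2v3 : v2 ≠ v3) :
    G.Adj t x ∨ G.Adj t y ∨ G.Adj t v3 := by
  by_contra hcon
  push_neg at hcon
  obtain ⟨htx, hty, htv3⟩ := hcon
  have hXY : ∀ v, v ∈ X → v ∈ Y → False := fun v h1 h2 =>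
    Set.disjoint_left.1 hbip.2.1 h1 h2
  have hside : ∀ a b c : V, G.Adj a b → G.Adj a c → ¬ G.Adj b c := by
    intro a b c hab hac hbc
    rcases hbip.2.2 hab with ⟨ha1, hb1⟩ | ⟨ha1, hb1⟩ <;>
      rcases hbip.2.2 hac with ⟨ha2, hc2⟩ | ⟨ha2, hc2⟩ <;>
      rcases hbip.2.2 hbc with ⟨hb3, hc3⟩ | ⟨hb3, hc3⟩ <;>
      first
        | exact hXY a ha1 ha2
        | exact hXY a ha2 ha1
        | exact hXY b hb1 hb3
        | exact hXY b hb3 hb1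
        | exact hXY c hc2 hc3
        | exact hXY c hc3 hc2
  have hut : ¬ G.Adj u t := hside v2 u t huv2.symm ht
  have hv2x' : ¬ G.Adj v2 x := hside u v2 x huv2 hx
  have hv2y' : ¬ G.Adj v2 y := hside u v2 y huv2 hy
  have hv2v3' : ¬ G.Adj v2 v3 := hside u v2 v3 huv2 hv3
  have hxy' : ¬ G.Adj x y := hside u x y hx hy
  have hxv3' : ¬ G.Adj x v3 := hside u x v3 hx hv3
  have hyv3' : ¬ G.Adj y v3 := hside u y v3 hy hv3
  have htx' : t ≠ x := fun h => hut (by rw [h]; exact hx)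
  have hty' : t ≠ y := fun h => hut (by rw [h]; exact hy)
  have htv3' : t ≠ v3 := fun h => hut (by rw [h]; exact hv3)
  have hv2u : v2 ≠ u := huv2.ne'
  have hv2t : v2 ≠ t := ht.ne
  have hux' : u ≠ x := hx.ne
  have huy' : u ≠ y := hy.ne
  have huv3' : u ≠ v3 := hv3.ne
  -- symmetric adjacency facts
  have huv2s := huv2.symm
  have hts := ht.symm
  have hxs := hx.symm
  have hys := hy.symm
  have hv3s := hv3.symm
  have huts : ¬ G.Adj t u := fun h => hut h.symm
  have htxs : ¬ G.Adj x t := fun h => htx h.symm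
  have htys : ¬ G.Adj y t := fun h => hty h.symm
  have htv3s : ¬ G.Adj v3 t := fun h => htv3 h.symm
  have hv2xs : ¬ G.Adj x v2 := fun h => hv2x' h.symm
  have hv2ys : ¬ G.Adj y v2 := fun h => hv2y' h.symm
  have hv2v3s : ¬ G.Adj v3 v2 := fun h => hv2v3' h.symm
  have hxys : ¬ G.Adj y x := fun h => hxy' h.symm
  have hxv3s : ¬ G.Adj v3 x := fun h => hxv3' h.symm
  have hyv3s : ¬ G.Adj v3 y := fun h => hyv3' h.symm
  have hloop : ∀ w : V, ¬ G.Adj w w := fun w => G.irrefl (v := w)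
  apply hfree
  have hinj : Function.Injective (![v2, u, t, x, y, v3] : Fin 6 → V) := by
    intro a b hab
    fin_cases a <;> fin_cases b <;>
      simp only [Matrix.cons_val_zero, Matrix.cons_val_one, Matrix.head_cons, Matrix.cons_val_two,
        Matrix.cons_val_three, Matrix.cons_val_four, Matrix.vecHead, Matrix.vecTail,
        Matrix.cons_val_succ, Matrix.cons_val_fin_one, Function.comp_apply] at hab <;>
      first
        | rfl
        | (exact absurd hab (by assumption))
        | (exact absurd hab.symm (by assumption))
  refine ⟨⟨![v2, u, t, x, y, v3], hinj⟩, ?_⟩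
  intro a b
  show G.Adj (![v2, u, t, x, y, v3] a) (![v2, u, t, x, y, v3] b) ↔ _
  fin_cases a <;> fin_cases b <;>
    simp only [Matrix.cons_val_zero, Matrix.cons_val_one, Matrix.head_cons, Matrix.cons_val_two,
      Matrix.cons_val_three, Matrix.cons_val_four, Matrix.vecHead, Matrix.vecTail,
      Matrix.cons_val_succ, Matrix.cons_val_fin_one, Function.comp_apply] <;>
    constructor <;> intro h <;>
      first
        | assumption
        | decide
        | exact absurd h (by decide)
        | exact (G.irrefl h).elim
        | exact absurd h (by assumption)

/-- If `F` is a `2`-factor with the minimum number of components of a connected balanced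
`S_{1,3}`-free bipartite graph with minimum degree at least `4`, then the neighborhood of
every vertex meets at most two components of `F`. -/
theorem stmt9 {V : Type*} [Fintype V] (G : SimpleGraph V)
    (X Y : Set V) (hbip : IsBipartition G X Y) (hbal : X.ncard = Y.ncard)
    (hconn : G.Connected) (hfree : SFree 1 3 G)
    (hdeg : ∀ v, 4 ≤ (G.neighborSet v).ncard)
    (F : SimpleGraph V) (hFG : F ≤ G) (hF2 : ∀ v, (F.neighborSet v).ncard = 2)
    (hmin : ∀ F' : SimpleGraph V, F' ≤ G → (∀ v, (F'.neighborSet v).ncard = 2) →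
      Nat.card F.ConnectedComponent ≤ Nat.card F'.ConnectedComponent)
    (u : V) :
    {c : F.ConnectedComponent | ∃ v, G.Adj u v ∧ F.connectedComponentMk v = c}.ncard ≤ 2 := by
  classical
  by_contra hcon
  push_neg at hcon
  set S : Set F.ConnectedComponent :=
    {c | ∃ v, G.Adj u v ∧ F.connectedComponentMk v = c} with hSdef
  have hSfin : S.Finite := Set.toFinite _
  have h3 : 3 ≤ S.ncard := hcon
  obtain ⟨c1, hc1⟩ : S.Nonempty := Set.nonempty_of_ncard_ne_zero (by omega)
  obtain ⟨c2, hc2⟩ : (S \ {c1}).Nonempty := by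
    apply Set.nonempty_of_ncard_ne_zero
    have := Set.ncard_diff_singleton_add_one hc1 hSfin
    omega
  obtain ⟨c3, hc3⟩ : (S \ {c1, c2}).Nonempty := by
    apply Set.nonempty_of_ncard_ne_zero
    have h1 : S ⊆ (S \ {c1, c2}) ∪ {c1, c2} := by
      intro z hz
      by_cases hz2 : z ∈ ({c1, c2} : Set F.ConnectedComponent)
      · exact Or.inr hz2
      · exact Or.inl ⟨hz, hz2⟩
    have h2 := Set.ncard_union_le (S \ {c1, c2}) {c1, c2}
    have h4 : ({c1, c2} : Set F.ConnectedComponent).ncard ≤ 2 := by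
      apply le_trans (Set.ncard_insert_le _ _)
      simp
    have h5 := Set.ncard_le_ncard h1 (Set.toFinite _)
    omega
  have hc2S : c2 ∈ S := hc2.1
  have hc3S : c3 ∈ S := hc3.1
  have hc21 : c2 ≠ c1 := by
    intro h
    exact hc2.2 (by simp [h])
  have hc31 : c3 ≠ c1 := by
    intro h
    exact hc3.2 (by simp [h])
  have hc32 : c3 ≠ c2 := by
    intro h
    exact hc3.2 (by simp [h])
  set c0 : F.ConnectedComponent := F.connectedComponentMk u with hc0
  have htwo : ∃ d2 d3 : F.ConnectedComponent,
      d2 ∈ S ∧ d3 ∈ S ∧ d2 ≠ d3 ∧ d2 ≠ c0 ∧ d3 ≠ c0 := by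
    rcases eq_or_ne c1 c0 with h | h
    · exact ⟨c2, c3, hc2S, hc3S, hc32.symm, h ▸ hc21, h ▸ hc31⟩
    · rcases eq_or_ne c2 c0 with h' | h'
      · exact ⟨c1, c3, hc1, hc3S, hc31.symm, h, h' ▸ hc32⟩
      · exact ⟨c1, c2, hc1, hc2S, hc21.symm, h, h'⟩
  obtain ⟨d2, d3, hd2S, hd3S, hdne, hd2, hd3⟩ := htwo
  obtain ⟨v2, hv2adj, hv2mk⟩ := hd2S
  obtain ⟨v3, hv3adj, hv3mk⟩ := hd3S
  have hsep2 : ¬ F.Reachable u v2 := by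
    intro h
    apply hd2
    rw [← hv2mk]
    exact (ConnectedComponent.sound h).symm
  have hsep3 : ¬ F.Reachable u v3 := by
    intro h
    apply hd3
    rw [← hv3mk]
    exact (ConnectedComponent.sound h).symm
  have hsep23 : ¬ F.Reachable v2 v3 := by
    intro h
    apply hdne
    rw [← hv2mk, ← hv3mk]
    exact ConnectedComponent.sound h
  obtain ⟨x, y, hxy, hxyeq⟩ := Set.ncard_eq_two.1 (hF2 u)
  have hux : F.Adj u x := by
    have : x ∈ F.neighborSet u := by rw [hxyeq]; exact Set.mem_insert _ _
    exact this
  have huy : F.Adj u y := by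
    have : y ∈ F.neighborSet u := by rw [hxyeq]; exact Set.mem_insert_of_mem _ rfl
    exact this
  obtain ⟨a2, b2, ha2b2, h2eq⟩ := Set.ncard_eq_two.1 (hF2 v2)
  have hva2 : F.Adj v2 a2 := by
    have : a2 ∈ F.neighborSet v2 := by rw [h2eq]; exact Set.mem_insert _ _
    exact this
  obtain ⟨a3, b3, ha3b3, h3eq⟩ := Set.ncard_eq_two.1 (hF2 v3)
  have hva3 : F.Adj v3 a3 := by
    have : a3 ∈ F.neighborSet v3 := by rw [h3eq]; exact Set.mem_insert _ _
    exact this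
  have hrux : F.Reachable u x := hux.reachable
  have hruy : F.Reachable u y := huy.reachable
  have ha2u : a2 ≠ u := by
    intro h
    apply hsep2
    have := hva2.reachable
    rw [h] at this
    exact this.symm
  have ha3u : a3 ≠ u := by
    intro h
    apply hsep3
    have := hva3.reachable
    rw [h] at this
    exact this.symm
  have hxv3 : x ≠ v3 := by
    intro h
    apply hsep3
    rw [← h]
    exact hrux
  have hyv3 : y ≠ v3 := by
    intro h
    apply hsep3
    rw [← h]
    exact hruy
  have hv2x : v2 ≠ x := by
    intro h
    apply hsep2
    rw [h]
    exact hrux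
  have hv2y : v2 ≠ y := by
    intro h
    apply hsep2
    rw [h]
    exact hruy
  have hv2v3 : v2 ≠ v3 := by
    intro h
    exact hsep23 (h ▸ Reachable.refl v2)
  rcases keyS G X Y hbip hfree u v2 a2 x y v3 hv2adj (hFG hva2) ha2u (hFG hux) (hFG huy)
      hv3adj hxy hxv3 hyv3 hv2x hv2y hv2v3 with hA | hA | hA
  · obtain ⟨F', h1, h2, hlt⟩ := merge_lemma G F hFG hF2 hux hva2 hv2adj hA hsep2
    exact absurd (hmin F' h1 h2) (not_le.mpr hlt)
  · obtain ⟨F', h1, h2, hlt⟩ := merge_lemma G F hFG hF2 huy hva2 hv2adj hA hsep2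
    exact absurd (hmin F' h1 h2) (not_le.mpr hlt)
  · rcases keyS G X Y hbip hfree u v3 a3 x y v2 hv3adj (hFG hva3) ha3u (hFG hux) (hFG huy)
        hv2adj hxy hv2x.symm hv2y.symm hxv3.symm hyv3.symm hv2v3.symm with hB | hB | hB
    · obtain ⟨F', h1, h2, hlt⟩ := merge_lemma G F hFG hF2 hux hva3 hv3adj hB hsep3
      exact absurd (hmin F' h1 h2) (not_le.mpr hlt)
    · obtain ⟨F', h1, h2, hlt⟩ := merge_lemma G F hFG hF2 huy hva3 hv3adj hB hsep3
      exact absurd (hmin F' h1 h2) (not_le.mpr hlt)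
    · have hsepf : ¬ F.Reachable a3 v2 := fun h => hsep23 (hva3.reachable.trans h).symm
      obtain ⟨F', h1, h2, hlt⟩ := merge_lemma G F hFG hF2 hva3.symm hva2 hB hA hsepf
      exact absurd (hmin F' h1 h2) (not_le.mpr hlt)
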